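/- arXiv:2502.02953 — 5 statements merged into one kernel-verified Lean document; each statement's English description precedes it below -/
import Mathlib

section
/- Fix L > 0 and r > 0, and let x, x' ∈ ℝⁿ satisfy |x_i| ≥ Lr and x_i ≠ 0 for all i, and |x'_i| ≥ Lr and x'_i ≠ 0 for all i. Then for all u, u' ∈ ℝ^m and all γ, γ' ∈ ℝ: (uᵀu' − ‖u‖‖u'‖)·(‖x − rZ(x)‖‖x' − rZ(x')‖ − (x − rZ(x))ᵀ(x' − rZ(x'))) + (γγ'·uᵀu' − |γγ'|·‖u‖‖u'‖)·(‖Z(x)‖‖Z(x')‖ − Z(x)ᵀZ(x')) + (γ'·uᵀu' − |γ'|·‖u‖‖u'‖)·((x − rZ(x))ᵀZ(x) − (x − rZ(x))ᵀZ(x')) + (γ·uᵀu' − |γ|·‖u‖‖u'‖)·((x' − rZ(x'))ᵀZ(x') − (x' − rZ(x'))ᵀZ(x)) ≤ 0. -/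
open Real

/-- One-bit quantization `Z(v) = L · sign(v)` applied entrywise. -/
noncomputable def Zv {n : ℕ} (L : ℝ) (x : Fin n → ℝ) : Fin n → ℝ :=
  fun i => L * Real.sign (x i)

/-- Euclidean dot product. -/
noncomputable def dotp {k : ℕ} (a b : Fin k → ℝ) : ℝ := ∑ i, a i * b i

/-- Euclidean norm. -/
noncomputable def nrm {k : ℕ} (a : Fin k → ℝ) : ℝ := Real.sqrt (∑ i, (a i) ^ 2)

/-- `x − r Z(x)`. -/
noncomputable def xr {n : ℕ} (L r : ℝ) (x : Fin n → ℝ) : Fin n → ℝ :=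
  fun i => x i - r * (L * Real.sign (x i))

lemma cs_abs {k : ℕ} (a b : Fin k → ℝ) : |dotp a b| ≤ nrm a * nrm b := by
  have h := Finset.sum_mul_sq_le_sq_mul_sq Finset.univ a b
  have h1 : |dotp a b| = Real.sqrt ((dotp a b) ^ 2) := (Real.sqrt_sq_eq_abs _).symm
  rw [h1, nrm, nrm, ← Real.sqrt_mul (by positivity)]
  exact Real.sqrt_le_sqrt h

lemma cs {k : ℕ} (a b : Fin k → ℝ) : dotp a b ≤ nrm a * nrm b :=
  le_trans (le_abs_self _) (cs_abs a b)

lemma coef_nonpos {k : ℕ} (u u' : Fin k → ℝ) (c : ℝ) :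
    c * dotp u u' - |c| * nrm u * nrm u' ≤ 0 := by
  have h := cs_abs u u'
  have : c * dotp u u' ≤ |c| * |dotp u u'| := by
    calc c * dotp u u' ≤ |c * dotp u u'| := le_abs_self _
      _ = |c| * |dotp u u'| := abs_mul _ _
  nlinarith [abs_nonneg c]

lemma key (L r t s' : ℝ) (hL : 0 < L) (hr : 0 < r) (ht : L * r ≤ |t|) (ht0 : t ≠ 0)
    (hs' : |s'| ≤ 1) :
    (t - r * (L * Real.sign t)) * (L * s') ≤ (t - r * (L * Real.sign t)) * (L * Real.sign t) := by
  have hs1 : -1 ≤ s' := neg_le_of_abs_le hs'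
  have hs2 : s' ≤ 1 := le_of_abs_le hs'
  rcases lt_or_gt_of_ne ht0 with h | h
  · rw [Real.sign_of_neg h]
    have h2 : t ≤ -(L * r) := by rw [abs_of_neg h] at ht; linarith
    have hp : 0 ≤ (-(t - r * (L * -1))) * (L * (s' + 1)) := by
      apply mul_nonneg <;> nlinarith
    nlinarith [hp]
  · rw [Real.sign_of_pos h]
    have h2 : L * r ≤ t := by rwa [abs_of_pos h] at ht
    have hp : 0 ≤ (t - r * (L * 1)) * (L * (1 - s')) := by
      apply mul_nonneg <;> nlinarith
    nlinarith [hp]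

lemma sign_abs_le (t : ℝ) : |Real.sign t| ≤ 1 := by
  rcases Real.sign_apply_eq t with h | h | h <;> rw [h] <;> norm_num

/-- the covariance-gap inequality underlying the discrete-set Gaussian
min-max comparison theorem. -/
theorem stmt10 (n m : ℕ) (L r : ℝ) (hL : 0 < L) (hr : 0 < r)
    (x x' : Fin n → ℝ)
    (hx : ∀ i, L * r ≤ |x i| ∧ x i ≠ 0)
    (hx' : ∀ i, L * r ≤ |x' i| ∧ x' i ≠ 0)
    (u u' : Fin m → ℝ) (γ γ' : ℝ) :
    (dotp u u' - nrm u * nrm u') *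
        (nrm (xr L r x) * nrm (xr L r x') - dotp (xr L r x) (xr L r x')) +
      (γ * γ' * dotp u u' - |γ * γ'| * nrm u * nrm u') *
        (nrm (Zv L x) * nrm (Zv L x') - dotp (Zv L x) (Zv L x')) +
      (γ' * dotp u u' - |γ'| * nrm u * nrm u') *
        (dotp (xr L r x) (Zv L x) - dotp (xr L r x) (Zv L x')) +
      (γ * dotp u u' - |γ| * nrm u * nrm u') *
        (dotp (xr L r x') (Zv L x') - dotp (xr L r x') (Zv L x)) ≤ 0 := by
  have c1 : dotp u u' - nrm u * nrm u' ≤ 0 := by linarith [cs u u']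
  have c2 : γ * γ' * dotp u u' - |γ * γ'| * nrm u * nrm u' ≤ 0 := coef_nonpos u u' _
  have c3 : γ' * dotp u u' - |γ'| * nrm u * nrm u' ≤ 0 := coef_nonpos u u' _
  have c4 : γ * dotp u u' - |γ| * nrm u * nrm u' ≤ 0 := coef_nonpos u u' _
  have f1 : 0 ≤ nrm (xr L r x) * nrm (xr L r x') - dotp (xr L r x) (xr L r x') := by
    linarith [cs (xr L r x) (xr L r x')]
  have f2 : 0 ≤ nrm (Zv L x) * nrm (Zv L x') - dotp (Zv L x) (Zv L x') := by
    linarith [cs (Zv L x) (Zv L x')]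
  have f3 : 0 ≤ dotp (xr L r x) (Zv L x) - dotp (xr L r x) (Zv L x') := by
    have : dotp (xr L r x) (Zv L x') ≤ dotp (xr L r x) (Zv L x) := by
      apply Finset.sum_le_sum
      intro i _
      exact key L r (x i) (Real.sign (x' i)) hL hr (hx i).1 (hx i).2 (sign_abs_le _)
    linarith
  have f4 : 0 ≤ dotp (xr L r x') (Zv L x') - dotp (xr L r x') (Zv L x) := by
    have : dotp (xr L r x') (Zv L x) ≤ dotp (xr L r x') (Zv L x') := by
      apply Finset.sum_le_sum
      intro i _
      exact key L r (x' i) (Real.sign (x i)) hL hr (hx' i).1 (hx' i).2 (sign_abs_le _)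
    linarith
  have t1 := mul_nonpos_of_nonpos_of_nonneg c1 f1
  have t2 := mul_nonpos_of_nonpos_of_nonneg c2 f2
  have t3 := mul_nonpos_of_nonpos_of_nonneg c3 f3
  have t4 := mul_nonpos_of_nonpos_of_nonneg c4 f4
  linarith
end

section
/- For any vectors a, b ∈ ℝⁿ there exists a sign sequence σ ∈ {−1, +1}ⁿ such that max( Σ_{i=1}^n σ_i a_i , Σ_{i=1}^n σ_i b_i ) ≤ 2·log 2 · max(‖a‖₂, ‖b‖₂). -/
open Real

lemma stmt13_sign (S t : ℝ) (h : 0 ≤ S * t) : |S - t| ≤ max |S| |t| := by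
  rcases le_total 0 S with hS | hS <;> rcases le_total 0 t with ht | ht
  · rw [abs_of_nonneg hS, abs_of_nonneg ht, abs_le, max_def]
    split_ifs <;> constructor <;> linarith
  · have h0 : S * t ≤ 0 := mul_nonpos_of_nonneg_of_nonpos hS ht
    have h1 : S * t = 0 := le_antisymm h0 h
    rcases mul_eq_zero.mp h1 with h2 | h2
    · rw [h2]
      simp only [abs_zero]; simpa using le_max_right |(0:ℝ)| |t|
    · rw [h2]
      simp only [abs_zero]; simpa using le_max_left |S| |(0:ℝ)|
  · have h0 : S * t ≤ 0 := mul_nonpos_of_nonpos_of_nonneg hS ht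
    have h1 : S * t = 0 := le_antisymm h0 h
    rcases mul_eq_zero.mp h1 with h2 | h2
    · rw [h2]
      simp only [abs_zero]; simpa using le_max_right |(0:ℝ)| |t|
    · rw [h2]
      simp only [abs_zero]; simpa using le_max_left |S| |(0:ℝ)|
  · rw [abs_of_nonpos hS, abs_of_nonpos ht, abs_le, max_def]
    split_ifs <;> constructor <;> linarith

lemma stmt13_sign' (S t : ℝ) (h : S * t ≤ 0) : |S + t| ≤ max |S| |t| := by
  have h2 : 0 ≤ S * (-t) := by nlinarith
  have := stmt13_sign S (-t) h2
  simpa using this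

lemma stmt13_aux (n : ℕ) (c : Fin n → ℝ) :
    ∃ σ : Fin n → ℝ, (∀ i, σ i = 1 ∨ σ i = -1) ∧
      |∑ i, σ i * c i| ≤ Real.sqrt (∑ i, (c i) ^ 2) := by
  induction n with
  | zero =>
    exact ⟨fun _ => 1, fun i => i.elim0, by simp [Real.sqrt_nonneg]⟩
  | succ n ih =>
    obtain ⟨σ, hσ, hle⟩ := ih (fun i => c i.castSucc)
    set S := ∑ i, σ i * c i.castSucc with hS
    set t := c (Fin.last n) with ht
    set s : ℝ := if 0 ≤ S * t then -1 else 1 with hs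
    refine ⟨Fin.snoc σ s, ?_, ?_⟩
    · intro i
      refine Fin.lastCases ?_ ?_ i
      · simp only [Fin.snoc_last, hs]
        split <;> simp
      · intro j
        simpa using hσ j
    · have hsum : ∑ i, (Fin.snoc σ s : Fin (n+1) → ℝ) i * c i = S + s * t := by
        rw [Fin.sum_univ_castSucc]
        simp [hS, ht]
      rw [hsum]
      have key : |S + s * t| ≤ max |S| |t| := by
        rw [hs]
        split_ifs with h
        · have e : S + (-1) * t = S - t := by ring
          rw [e]
          exact stmt13_sign S t h
        · push_neg at h
          have e : S + 1 * t = S + t := by ring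
          rw [e]
          exact stmt13_sign' S t h.le
      refine key.trans ?_
      have hfull : (∑ i, (c i) ^ 2) = (∑ i : Fin n, (c i.castSucc) ^ 2) + t ^ 2 := by
        rw [Fin.sum_univ_castSucc]
      have h1 : |S| ≤ Real.sqrt (∑ i, (c i) ^ 2) := by
        refine hle.trans (Real.sqrt_le_sqrt ?_)
        rw [hfull]
        nlinarith [sq_nonneg t]
      have h2 : |t| ≤ Real.sqrt (∑ i, (c i) ^ 2) := by
        rw [← Real.sqrt_sq_eq_abs]
        refine Real.sqrt_le_sqrt ?_
        rw [hfull]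
        have : (0:ℝ) ≤ ∑ i : Fin n, (c i.castSucc) ^ 2 :=
          Finset.sum_nonneg fun i _ => sq_nonneg _
        linarith
      exact max_le h1 h2

/-- Rademacher-sequence selection via the finite class lemma applied to
`{a, b}`: there is a sign sequence `σ` such that
`max(Σ σᵢ aᵢ, Σ σᵢ bᵢ) ≤ 2 log 2 · max(‖a‖₂, ‖b‖₂)`. -/
theorem stmt13 (n : ℕ) (a b : Fin n → ℝ) :
    ∃ σ : Fin n → ℝ, (∀ i, σ i = 1 ∨ σ i = -1) ∧
      max (∑ i, σ i * a i) (∑ i, σ i * b i) ≤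
        2 * Real.log 2 *
          max (Real.sqrt (∑ i, (a i) ^ 2)) (Real.sqrt (∑ i, (b i) ^ 2)) := by
  obtain ⟨σ, hσ, hle⟩ := stmt13_aux n (fun i => a i - b i)
  set Sa := ∑ i, σ i * a i with hSa
  set Sb := ∑ i, σ i * b i with hSb
  have hdiff : ∑ i, σ i * (a i - b i) = Sa - Sb := by
    rw [hSa, hSb, ← Finset.sum_sub_distrib]
    exact Finset.sum_congr rfl fun i _ => by ring
  rw [hdiff] at hle
  set M := max (Real.sqrt (∑ i, (a i) ^ 2)) (Real.sqrt (∑ i, (b i) ^ 2)) with hM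
  have hM0 : 0 ≤ M := le_trans (Real.sqrt_nonneg _) (le_max_left _ _)
  have hA : (∑ i, (a i) ^ 2) ≤ M ^ 2 := by
    have h1 : Real.sqrt (∑ i, (a i) ^ 2) ≤ M := le_max_left _ _
    have h2 : (0:ℝ) ≤ ∑ i, (a i) ^ 2 := Finset.sum_nonneg fun i _ => sq_nonneg _
    nlinarith [Real.sq_sqrt h2, Real.sqrt_nonneg (∑ i, (a i) ^ 2)]
  have hB : (∑ i, (b i) ^ 2) ≤ M ^ 2 := by
    have h1 : Real.sqrt (∑ i, (b i) ^ 2) ≤ M := le_max_right _ _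
    have h2 : (0:ℝ) ≤ ∑ i, (b i) ^ 2 := Finset.sum_nonneg fun i _ => sq_nonneg _
    nlinarith [Real.sq_sqrt h2, Real.sqrt_nonneg (∑ i, (b i) ^ 2)]
  have hsum2 : (∑ i, (a i - b i) ^ 2) ≤ 4 * M ^ 2 := by
    have h3 : (∑ i, (a i - b i) ^ 2) ≤ ∑ i, (2 * (a i) ^ 2 + 2 * (b i) ^ 2) := by
      refine Finset.sum_le_sum fun i _ => ?_
      nlinarith [sq_nonneg (a i + b i)]
    rw [Finset.sum_add_distrib, ← Finset.mul_sum, ← Finset.mul_sum] at h3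
    linarith
  have hsqrt : Real.sqrt (∑ i, (a i - b i) ^ 2) ≤ 2 * M := by
    calc Real.sqrt (∑ i, (a i - b i) ^ 2) ≤ Real.sqrt (4 * M ^ 2) :=
          Real.sqrt_le_sqrt hsum2
      _ = 2 * M := by
          rw [show (4:ℝ) * M ^ 2 = (2 * M) ^ 2 by ring]
          exact Real.sqrt_sq (by linarith)
  have hlog : (1:ℝ) ≤ 2 * Real.log 2 := by
    have := Real.log_two_gt_d9
    linarith
  have hRHS : M ≤ 2 * Real.log 2 * M := by nlinarith
  have habs : |Sa - Sb| ≤ 2 * M := hle.trans hsqrt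
  by_cases h : Sa + Sb ≤ 0
  · refine ⟨σ, hσ, ?_⟩
    have hmax : max Sa Sb ≤ M := by
      rcases abs_le.mp habs with ⟨h1, h2⟩
      rw [max_le_iff]; constructor <;> linarith
    linarith
  · refine ⟨fun i => -σ i, fun i => ?_, ?_⟩
    · rcases hσ i with hh | hh <;> simp [hh]
    · have e1 : ∑ i, (fun i => -σ i) i * a i = -Sa := by
        rw [hSa, ← Finset.sum_neg_distrib]
        exact Finset.sum_congr rfl fun i _ => by ring
      have e2 : ∑ i, (fun i => -σ i) i * b i = -Sb := by
        rw [hSb, ← Finset.sum_neg_distrib]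
        exact Finset.sum_congr rfl fun i _ => by ring
      rw [e1, e2]
      push_neg at h
      have hmax : max (-Sa) (-Sb) ≤ M := by
        rcases abs_le.mp habs with ⟨h1, h2⟩
        rw [max_le_iff]; constructor <;> linarith
      linarith
end

section
/- Fix L > 0, A > 0 and a, b > 0. For any C₁, C₂ > 0 there exist C_y > 0 and ε₀ > 0, depending only on (L, A, a, b, C₁, C₂), such that for all ε ∈ (0, ε₀), all n, and all y ∈ ℝⁿ satisfying ‖y‖∞ ≤ A, |y_i| > Lε² for all i, |(1/√n)‖y‖₂ − √b| ≤ C₁·ε³ and |(1/n)‖y‖₁ − a| ≤ C₂·ε³, one has | ρ_{ε²}(y) − (a − ε²L)/√(b − 2ε²La) | ≤ C_y·ε³. -/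
open Real

/-- `ρ_r(y) = (y − rZ(y))ᵀ Z(y) / (‖y − rZ(y)‖ ‖Z(y)‖)`. -/
noncomputable def rhoR {n : ℕ} (L r : ℝ) (y : Fin n → ℝ) : ℝ :=
  dotp (xr L r y) (Zv L y) / (nrm (xr L r y) * nrm (Zv L y))

set_option maxHeartbeats 1000000

lemma sqrt_diff_le {x y c : ℝ} (hc : 0 < c) (hx : c ≤ x) (hy : c ≤ y) :
    |Real.sqrt x - Real.sqrt y| ≤ |x - y| / (2 * Real.sqrt c) := by
  have h0x : (0:ℝ) ≤ x := le_trans hc.le hx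
  have h0y : (0:ℝ) ≤ y := le_trans hc.le hy
  have hsc : 0 < Real.sqrt c := Real.sqrt_pos.mpr hc
  have hsx : Real.sqrt c ≤ Real.sqrt x := Real.sqrt_le_sqrt hx
  have hsy : Real.sqrt c ≤ Real.sqrt y := Real.sqrt_le_sqrt hy
  have key : (Real.sqrt x - Real.sqrt y) * (Real.sqrt x + Real.sqrt y) = x - y := by
    have := Real.sq_sqrt h0x
    have := Real.sq_sqrt h0y
    nlinarith
  have hpos : 0 < Real.sqrt x + Real.sqrt y := by linarith
  have habs : |Real.sqrt x - Real.sqrt y| * (Real.sqrt x + Real.sqrt y) = |x - y| := by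
    rw [← abs_of_pos hpos, ← abs_mul, key]
  rw [le_div_iff₀ (by positivity)]
  calc |Real.sqrt x - Real.sqrt y| * (2 * Real.sqrt c)
      ≤ |Real.sqrt x - Real.sqrt y| * (Real.sqrt x + Real.sqrt y) := by
        apply mul_le_mul_of_nonneg_left (by linarith) (abs_nonneg _)
    _ = |x - y| := habs

lemma scalar_est (L a b C₁ C₂ K₁ : ℝ) (hL : 0 < L) (ha : 0 < a) (hb : 0 < b)
    (hC₁ : 0 < C₁) (hC₂ : 0 < C₂)
    (hK₁ : K₁ = C₁ * (2 * Real.sqrt b + C₁) + 2 * L * C₂ + L ^ 2)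
    (ε s1 s2 : ℝ) (hε : 0 < ε) (hε1 : ε ≤ 1)
    (h2L : ε * L ≤ a / 2) (h2C : C₂ * ε ≤ a / 2) (h2K : K₁ * ε ≤ b / 4)
    (h2b : 2 * ε * L * a ≤ b / 4)
    (hs2 : 0 ≤ s2)
    (h1 : |s1 - a| ≤ C₂ * ε ^ 3) (h2 : |Real.sqrt s2 - Real.sqrt b| ≤ C₁ * ε ^ 3) :
    |(s1 - ε ^ 2 * L) / Real.sqrt (s2 - 2 * ε ^ 2 * L * s1 + ε ^ 4 * L ^ 2)
      - (a - ε ^ 2 * L) / Real.sqrt (b - 2 * ε ^ 2 * L * a)|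
      ≤ (C₂ / Real.sqrt (b / 2) + a * K₁ / ((b / 2) * Real.sqrt (b / 2))) * ε ^ 3 := by
  have hεfac : 0 ≤ ε * (1 - ε) * (1 + ε) :=
    mul_nonneg (mul_nonneg hε.le (by linarith)) (by linarith)
  have hε3 : ε ^ 3 ≤ ε := by nlinarith
  have hε2 : ε ^ 2 ≤ ε := by nlinarith [mul_nonneg hε.le (sub_nonneg.mpr hε1)]
  have hε4 : ε ^ 4 ≤ ε ^ 3 := by nlinarith [pow_pos hε 3]
  have hK₁pos : 0 < K₁ := by
    have : 0 < Real.sqrt b := Real.sqrt_pos.mpr hb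
    rw [hK₁]; positivity
  set D : ℝ := s2 - 2 * ε ^ 2 * L * s1 + ε ^ 4 * L ^ 2 with hD
  set D₀ : ℝ := b - 2 * ε ^ 2 * L * a with hD₀
  have hsb : 0 < Real.sqrt b := Real.sqrt_pos.mpr hb
  have hs2b : |s2 - b| ≤ C₁ * (2 * Real.sqrt b + C₁) * ε ^ 3 := by
    have e1 : s2 - b = (Real.sqrt s2 - Real.sqrt b) * (Real.sqrt s2 + Real.sqrt b) := by
      have := Real.sq_sqrt hs2
      have := Real.sq_sqrt hb.le
      nlinarith
    rw [e1, abs_mul]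
    have h2' := abs_le.mp h2
    have hsum : |Real.sqrt s2 + Real.sqrt b| ≤ 2 * Real.sqrt b + C₁ := by
      rw [abs_of_nonneg (by positivity)]
      have : C₁ * ε ^ 3 ≤ C₁ := by nlinarith [pow_pos hε 3]
      linarith [h2'.2]
    calc |Real.sqrt s2 - Real.sqrt b| * |Real.sqrt s2 + Real.sqrt b|
        ≤ (C₁ * ε ^ 3) * (2 * Real.sqrt b + C₁) := by
          apply mul_le_mul h2 hsum (abs_nonneg _) (by positivity)
      _ = C₁ * (2 * Real.sqrt b + C₁) * ε ^ 3 := by ring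
  have h1' := abs_le.mp h1
  have hC₂ε : C₂ * ε ^ 3 ≤ a / 2 := by
    have := mul_le_mul_of_nonneg_left hε3 hC₂.le
    linarith
  have hDD₀ : |D - D₀| ≤ K₁ * ε ^ 3 := by
    have e : D - D₀ = (s2 - b) + (-(2 * ε ^ 2 * L * (s1 - a))) + ε ^ 4 * L ^ 2 := by
      rw [hD, hD₀]; ring
    have t2 : |2 * ε ^ 2 * L * (s1 - a)| ≤ 2 * L * C₂ * ε ^ 3 := by
      rw [abs_mul, abs_of_nonneg (by positivity : (0:ℝ) ≤ 2 * ε ^ 2 * L)]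
      calc 2 * ε ^ 2 * L * |s1 - a| ≤ 2 * ε ^ 2 * L * (C₂ * ε ^ 3) := by
            apply mul_le_mul_of_nonneg_left h1 (by positivity)
        _ ≤ 2 * L * C₂ * ε ^ 3 := by
            have h21 : ε ^ 2 ≤ 1 := by nlinarith
            nlinarith [mul_le_mul_of_nonneg_left h21 (show (0:ℝ) ≤ 2 * L * (C₂ * ε ^ 3) by positivity)]
    have t3 : |ε ^ 4 * L ^ 2| ≤ L ^ 2 * ε ^ 3 := by
      rw [abs_of_nonneg (by positivity)]; nlinarith
    calc |D - D₀| ≤ |(s2 - b) + (-(2 * ε ^ 2 * L * (s1 - a)))| + |ε ^ 4 * L ^ 2| := by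
          rw [e]; exact abs_add_le _ _
      _ ≤ |s2 - b| + |-(2 * ε ^ 2 * L * (s1 - a))| + |ε ^ 4 * L ^ 2| := by
          linarith [abs_add_le (s2 - b) (-(2 * ε ^ 2 * L * (s1 - a)))]
      _ ≤ C₁ * (2 * Real.sqrt b + C₁) * ε ^ 3 + 2 * L * C₂ * ε ^ 3 + L ^ 2 * ε ^ 3 := by
          rw [abs_neg]; linarith
      _ = K₁ * ε ^ 3 := by rw [hK₁]; ring
  have hKε3 : K₁ * ε ^ 3 ≤ b / 4 := by
    nlinarith [mul_le_mul_of_nonneg_left hε3 hK₁pos.le]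
  have hε2La : 2 * ε ^ 2 * L * a ≤ b / 4 := by
    nlinarith [mul_le_mul_of_nonneg_right hε2 (show (0:ℝ) ≤ 2 * L * a by positivity)]
  have hD₀big : b / 2 ≤ D₀ := by rw [hD₀]; linarith
  have hDbig : b / 2 ≤ D := by
    have := abs_le.mp hDD₀; linarith
  have hb2 : (0:ℝ) < b / 2 := by linarith
  set m : ℝ := Real.sqrt (b / 2) with hm
  have hmpos : 0 < m := Real.sqrt_pos.mpr hb2
  have hm2 : m ^ 2 = b / 2 := Real.sq_sqrt hb2.le
  set d : ℝ := Real.sqrt D with hd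
  set d0 : ℝ := Real.sqrt D₀ with hd0
  have hdm : m ≤ d := Real.sqrt_le_sqrt hDbig
  have hdm0 : m ≤ d0 := Real.sqrt_le_sqrt hD₀big
  have hdpos : 0 < d := lt_of_lt_of_le hmpos hdm
  have hd0pos : 0 < d0 := lt_of_lt_of_le hmpos hdm0
  set N : ℝ := s1 - ε ^ 2 * L with hN
  set N₀ : ℝ := a - ε ^ 2 * L with hN₀
  have hε2L : ε ^ 2 * L ≤ a / 2 := by
    nlinarith [mul_le_mul_of_nonneg_right hε2 hL.le]
  have hNN₀ : |N - N₀| ≤ C₂ * ε ^ 3 := by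
    have e : N - N₀ = s1 - a := by rw [hN, hN₀]; ring
    rw [e]; exact h1
  have hN₀a : |N₀| ≤ a := by
    rw [hN₀, abs_of_nonneg (by nlinarith)]; nlinarith [pow_pos hε 2]
  have hdd0 : |d0 - d| ≤ K₁ * ε ^ 3 / (2 * m) := by
    calc |d0 - d| ≤ |D₀ - D| / (2 * m) := sqrt_diff_le hb2 hD₀big hDbig
      _ ≤ K₁ * ε ^ 3 / (2 * m) := by
          gcongr
          rw [abs_sub_comm]; exact hDD₀
  have key : N / d - N₀ / d0 = (N - N₀) / d + N₀ * (d0 - d) / (d * d0) := by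
    field_simp
    ring
  have ht1 : |(N - N₀) / d| ≤ C₂ * ε ^ 3 / m := by
    rw [abs_div, abs_of_pos hdpos]
    gcongr
  have hdenom : b / 2 ≤ d * d0 := by
    have h := mul_le_mul hdm hdm0 hmpos.le hdpos.le
    calc b / 2 = m * m := by rw [← hm2]; ring
      _ ≤ d * d0 := h
  have ht2 : |N₀ * (d0 - d) / (d * d0)| ≤ a * K₁ / ((b / 2) * m) * ε ^ 3 := by
    rw [abs_div, abs_mul, abs_of_pos (mul_pos hdpos hd0pos)]
    have hnum : |N₀| * |d0 - d| ≤ a * (K₁ * ε ^ 3 / (2 * m)) :=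
      mul_le_mul hN₀a hdd0 (abs_nonneg _) ha.le
    calc |N₀| * |d0 - d| / (d * d0) ≤ a * (K₁ * ε ^ 3 / (2 * m)) / (b / 2) := by
          apply div_le_div₀ (by positivity) hnum hb2 hdenom
      _ = a * K₁ / ((b / 2) * m) * ε ^ 3 / 2 := by field_simp
      _ ≤ a * K₁ / ((b / 2) * m) * ε ^ 3 := by
          have : 0 ≤ a * K₁ / ((b / 2) * m) * ε ^ 3 := by positivity
          linarith
  have e1 : C₂ * ε ^ 3 / m = C₂ / m * ε ^ 3 := by ring
  calc |N / d - N₀ / d0| ≤ |(N - N₀) / d| + |N₀ * (d0 - d) / (d * d0)| := by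
        rw [key]; exact abs_add_le _ _
    _ ≤ C₂ * ε ^ 3 / m + a * K₁ / ((b / 2) * m) * ε ^ 3 := by linarith
    _ = (C₂ / m + a * K₁ / ((b / 2) * m)) * ε ^ 3 := by ring

/-- quantitative closeness of `ρ_{ε²}(y)` to `θ^ε = (a − ε²L)/√(b − 2ε²La)`
for vectors `y` with concentrated `ℓ₁` and `ℓ₂` norms and no small entries. -/
theorem stmt15 (L A a b : ℝ) (hL : 0 < L) (hA : 0 < A) (ha : 0 < a) (hb : 0 < b) :
    ∀ C₁ C₂ : ℝ, 0 < C₁ → 0 < C₂ →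
      ∃ Cy ε₀ : ℝ, 0 < Cy ∧ 0 < ε₀ ∧
        ∀ ε : ℝ, 0 < ε → ε < ε₀ →
          ∀ (n : ℕ) (y : Fin n → ℝ),
            (∀ i, |y i| ≤ A) →
            (∀ i, L * ε ^ 2 < |y i|) →
            |nrm y / Real.sqrt n - Real.sqrt b| ≤ C₁ * ε ^ 3 →
            |(∑ i, |y i|) / n - a| ≤ C₂ * ε ^ 3 →
            |rhoR L (ε ^ 2) y - (a - ε ^ 2 * L) / Real.sqrt (b - 2 * ε ^ 2 * L * a)| ≤
              Cy * ε ^ 3 := by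
  intro C₁ C₂ hC₁ hC₂
  have hsb : 0 < Real.sqrt b := Real.sqrt_pos.mpr hb
  set K₁ : ℝ := C₁ * (2 * Real.sqrt b + C₁) + 2 * L * C₂ + L ^ 2 with hK₁
  have hK₁pos : 0 < K₁ := by rw [hK₁]; positivity
  refine ⟨C₂ / Real.sqrt (b / 2) + a * K₁ / ((b / 2) * Real.sqrt (b / 2)),
    min 1 (min (a / (2 * L)) (min (a / (2 * C₂)) (min (b / (4 * K₁)) (b / (8 * L * a))))),
    by positivity, by positivity, ?_⟩
  intro ε hε hεlt n y hyA hysmall hn2 hn1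
  have hε1 : ε ≤ 1 := le_of_lt (lt_of_lt_of_le hεlt (min_le_left _ _))
  have hεa : ε ≤ a / (2 * L) :=
    le_of_lt (lt_of_lt_of_le hεlt ((min_le_right _ _).trans (min_le_left _ _)))
  have hεc : ε ≤ a / (2 * C₂) :=
    le_of_lt (lt_of_lt_of_le hεlt ((min_le_right _ _).trans ((min_le_right _ _).trans (min_le_left _ _))))
  have hεk : ε ≤ b / (4 * K₁) :=
    le_of_lt (lt_of_lt_of_le hεlt ((min_le_right _ _).trans ((min_le_right _ _).trans ((min_le_right _ _).trans (min_le_left _ _)))))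
  have hεb : ε ≤ b / (8 * L * a) :=
    le_of_lt (lt_of_lt_of_le hεlt ((min_le_right _ _).trans ((min_le_right _ _).trans ((min_le_right _ _).trans (min_le_right _ _)))))
  have h2L : ε * L ≤ a / 2 := by
    rw [le_div_iff₀ (by positivity)] at hεa; linarith
  have h2C : C₂ * ε ≤ a / 2 := by
    rw [le_div_iff₀ (by positivity)] at hεc; linarith
  have h2K : K₁ * ε ≤ b / 4 := by
    rw [le_div_iff₀ (by positivity)] at hεk; nlinarith
  have h2b : 2 * ε * L * a ≤ b / 4 := by
    rw [le_div_iff₀ (by positivity)] at hεb; nlinarith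
  -- n must be positive
  rcases Nat.eq_zero_or_pos n with hn0 | hnpos
  · exfalso
    subst hn0
    simp only [Finset.univ_eq_empty, Finset.sum_empty, Nat.cast_zero, div_zero, zero_sub,
      abs_neg, abs_of_pos ha] at hn1
    have hε3 : ε ^ 3 ≤ ε := by
      nlinarith [mul_nonneg (mul_nonneg hε.le (sub_nonneg.mpr hε1)) (show (0:ℝ) ≤ 1 + ε by linarith)]
    nlinarith [mul_le_mul_of_nonneg_left hε3 hC₂.le]
  have hnR : (0:ℝ) < (n:ℝ) := by exact_mod_cast hnpos
  -- sign facts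
  have hsgn : ∀ i, (Real.sign (y i)) ^ 2 = 1 ∧ y i * Real.sign (y i) = |y i| := by
    intro i
    have h0 : y i ≠ 0 := by
      intro h
      have := hysmall i
      rw [h, abs_zero] at this
      nlinarith [pow_pos hε 2]
    rcases h0.lt_or_gt with hlt | hgt
    · rw [Real.sign_of_neg hlt, abs_of_neg hlt]; constructor <;> ring
    · rw [Real.sign_of_pos hgt, abs_of_pos hgt]; constructor <;> ring
  set T1 : ℝ := ∑ i, |y i| with hT1
  set T2 : ℝ := ∑ i, (y i) ^ 2 with hT2
  have hT2nn : 0 ≤ T2 := Finset.sum_nonneg fun i _ => sq_nonneg _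
  -- dot product
  have hdot : dotp (xr L (ε ^ 2) y) (Zv L y) = L * T1 - n * (ε ^ 2 * L ^ 2) := by
    unfold dotp xr Zv
    calc ∑ i, (y i - ε ^ 2 * (L * Real.sign (y i))) * (L * Real.sign (y i))
        = ∑ i, (L * |y i| - ε ^ 2 * L ^ 2) := by
          apply Finset.sum_congr rfl
          intro i _
          obtain ⟨hs1, hs2⟩ := hsgn i
          have : (y i - ε ^ 2 * (L * Real.sign (y i))) * (L * Real.sign (y i))
              = L * (y i * Real.sign (y i)) - ε ^ 2 * L ^ 2 * (Real.sign (y i)) ^ 2 := by ring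
          rw [this, hs1, hs2]; ring
      _ = L * T1 - n * (ε ^ 2 * L ^ 2) := by
          rw [Finset.sum_sub_distrib, ← Finset.mul_sum, Finset.sum_const, Finset.card_fin]
          rw [hT1]; push_cast; ring
  -- norm of Z
  have hZ : nrm (Zv L y) = L * Real.sqrt n := by
    unfold nrm Zv
    have e : ∑ i, (L * Real.sign (y i)) ^ 2 = (n : ℝ) * L ^ 2 := by
      calc ∑ i, (L * Real.sign (y i)) ^ 2 = ∑ _i : Fin n, L ^ 2 := by
            apply Finset.sum_congr rfl
            intro i _
            obtain ⟨hs1, _⟩ := hsgn i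
            rw [mul_pow, hs1]; ring
        _ = (n : ℝ) * L ^ 2 := by rw [Finset.sum_const, Finset.card_fin]; push_cast; ring
    rw [e, Real.sqrt_mul (by positivity), Real.sqrt_sq hL.le]; ring
  -- norm of xr squared
  set q : ℝ := T2 / n - 2 * ε ^ 2 * L * (T1 / n) + ε ^ 4 * L ^ 2 with hq
  have hxrs : ∑ i, (xr L (ε ^ 2) y i) ^ 2 = (n : ℝ) * q := by
    unfold xr
    calc ∑ i, (y i - ε ^ 2 * (L * Real.sign (y i))) ^ 2
        = ∑ i, ((y i) ^ 2 - 2 * ε ^ 2 * L * |y i| + ε ^ 4 * L ^ 2) := by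
          apply Finset.sum_congr rfl
          intro i _
          obtain ⟨hs1, hs2⟩ := hsgn i
          have : (y i - ε ^ 2 * (L * Real.sign (y i))) ^ 2
              = (y i) ^ 2 - 2 * ε ^ 2 * L * (y i * Real.sign (y i))
                + ε ^ 4 * L ^ 2 * (Real.sign (y i)) ^ 2 := by ring
          rw [this, hs1, hs2]; ring
      _ = T2 - 2 * ε ^ 2 * L * T1 + n * (ε ^ 4 * L ^ 2) := by
          rw [Finset.sum_add_distrib, Finset.sum_sub_distrib, ← Finset.mul_sum,
            Finset.sum_const, Finset.card_fin, hT1, hT2]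
          push_cast; ring
      _ = (n : ℝ) * q := by rw [hq]; field_simp
  have hxrnrm : nrm (xr L (ε ^ 2) y) = Real.sqrt n * Real.sqrt q := by
    unfold nrm
    rw [hxrs, Real.sqrt_mul hnR.le]
  -- rho formula
  have hrho : rhoR L (ε ^ 2) y = (T1 / n - ε ^ 2 * L) / Real.sqrt q := by
    unfold rhoR
    rw [hdot, hZ, hxrnrm]
    have hsn : Real.sqrt n * Real.sqrt n = (n : ℝ) := Real.mul_self_sqrt hnR.le
    have e1 : Real.sqrt n * Real.sqrt q * (L * Real.sqrt n)
        = Real.sqrt n * Real.sqrt n * (L * Real.sqrt q) := by ring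
    have e2 : L * T1 - n * (ε ^ 2 * L ^ 2) = (n : ℝ) * L * (T1 / n - ε ^ 2 * L) := by
      field_simp
    rw [e1, hsn, e2,
      show (n : ℝ) * (L * Real.sqrt q) = (n : ℝ) * L * Real.sqrt q by ring,
      mul_div_mul_left _ _ (by positivity : ((n : ℝ) * L) ≠ 0)]
  -- hypotheses in scalar form
  have hs2' : |Real.sqrt (T2 / n) - Real.sqrt b| ≤ C₁ * ε ^ 3 := by
    have : Real.sqrt (T2 / n) = nrm y / Real.sqrt n := by
      unfold nrm
      rw [Real.sqrt_div hT2nn]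
    rw [this]; exact hn2
  have hs1' : |T1 / n - a| ≤ C₂ * ε ^ 3 := hn1
  have hq' : T2 / n - 2 * ε ^ 2 * L * (T1 / n) + ε ^ 4 * L ^ 2 = q := hq.symm
  have := scalar_est L a b C₁ C₂ K₁ hL ha hb hC₁ hC₂ hK₁ ε (T1 / n) (T2 / n) hε hε1
    h2L h2C h2K h2b (by positivity) hs1' hs2'
  rw [hq'] at this
  rw [hrho]
  exact this
end

section
/- Fix A > 0, L > 0, C₀ ∈ (0,1), C_y > 0, and a, b > 0 with a² < b; define θ^ε = (a − ε²L)/√(b − 2ε²La) and the intervals I₁ = (−4A/5, −3A/5), I₂ = (−2A/5, −A/5), I₃ = (A/5, 2A/5), I₄ = (3A/5, 4A/5). There exist ε₀ > 0 and Ĉ_y > 0, depending only on (A, L, C₀, C_y, a, b), such that for all ε ∈ (0, ε₀), all n, all θ₁, θ₂ ∈ (θ^ε − C_y·ε³, θ^ε + C_y·ε³), and every y₁ ∈ ℝⁿ with ‖y₁‖∞ ≤ A, with no entry in (−Lε², Lε²), with ρ_{ε²}(y₁) = θ₁, and with at least C₀·n entries in each interval I_k for k = 1, 2, 3, 4, there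 exists y₂ ∈ ℝⁿ with ‖y₂‖∞ ≤ A satisfying: (i) ρ_{ε²}(y₂) = θ₂; (ii) sign(y₂) = sign(y₁) entrywise; (iii) ‖y₂‖₁ = ‖y₁‖₁; (iv) (1/√n)‖y₂ − y₁‖₂ ≤ Ĉ_y·|θ₁ − θ₂|; (v) every entry of y₁ lying in (−A/10, A/10) is left unchanged in y₂. -/
open Real

/-- `θ^ε = (a − ε²L)/√(b − 2ε²La)`. -/
noncomputable def thetaEps (L a b ε : ℝ) : ℝ :=
  (a - ε ^ 2 * L) / Real.sqrt (b - 2 * ε ^ 2 * L * a)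

lemma rho_formula {n : ℕ} (L r : ℝ) (hL : 0 < L) (y : Fin n → ℝ) (hy : ∀ i, y i ≠ 0) :
    rhoR L r y = (∑ i, (|y i| - r * L)) /
      (Real.sqrt n * Real.sqrt (∑ i, (|y i| - r * L) ^ 2)) := by
  have key : ∀ i, Real.sign (y i) * y i = |y i| ∧ Real.sign (y i) ^ 2 = 1 := by
    intro i
    rcases lt_or_gt_of_ne (hy i) with h | h
    · rw [Real.sign_of_neg h, abs_of_neg h]; constructor <;> ring
    · rw [Real.sign_of_pos h, abs_of_pos h]; constructor <;> ring
  have hdot : dotp (xr L r y) (Zv L y) = L * ∑ i, (|y i| - r * L) := by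
    unfold dotp xr Zv
    rw [Finset.mul_sum]
    refine Finset.sum_congr rfl fun i _ => ?_
    obtain ⟨h1, h2⟩ := key i
    linear_combination L * h1 - r * L ^ 2 * h2
  have hxr : nrm (xr L r y) = Real.sqrt (∑ i, (|y i| - r * L) ^ 2) := by
    unfold nrm xr
    congr 1
    refine Finset.sum_congr rfl fun i _ => ?_
    obtain ⟨h1, h2⟩ := key i
    have h3 : |y i| ^ 2 = (y i) ^ 2 := sq_abs (y i)
    linear_combination (-2 * r * L) * h1 + r ^ 2 * L ^ 2 * h2 - h3
  have hZ : nrm (Zv L y) = Real.sqrt n * L := by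
    unfold nrm Zv
    have : ∀ i, (L * Real.sign (y i)) ^ 2 = L ^ 2 := by
      intro i
      obtain ⟨h1, h2⟩ := key i
      linear_combination L ^ 2 * h2
    rw [Finset.sum_congr rfl fun i _ => this i]
    rw [Finset.sum_const, Finset.card_univ, Fintype.card_fin, nsmul_eq_mul]
    rw [Real.sqrt_mul (by positivity), Real.sqrt_sq hL.le]
  rw [rhoR, hdot, hxr, hZ]
  rw [show Real.sqrt (∑ i, (|y i| - r * L) ^ 2) * (Real.sqrt ↑n * L)
      = (Real.sqrt ↑n * Real.sqrt (∑ i, (|y i| - r * L) ^ 2)) * L by ring,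
    show L * ∑ i, (|y i| - r * L) = (∑ i, (|y i| - r * L)) * L by ring,
    mul_div_mul_right _ _ hL.ne']

set_option maxHeartbeats 2000000 in
/-- given `y₁` with prescribed correlation `ρ_{ε²}(y₁) = θ₁` and enough
entries in each of the four reference intervals, one can modify it into `y₂` realizing any
nearby correlation `θ₂` while keeping signs, the `ℓ₁` norm, the small entries, and moving
by at most `Ĉ_y |θ₁ − θ₂|` in normalized `ℓ₂` distance. -/
theorem stmt16 (A L C₀ Cy a b : ℝ) (hA : 0 < A) (hL : 0 < L) (hC₀ : 0 < C₀) (hC₀' : C₀ < 1)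
    (hCy : 0 < Cy) (ha : 0 < a) (hb : 0 < b) (hab : a ^ 2 < b) :
    ∃ ε₀ Chat : ℝ, 0 < ε₀ ∧ 0 < Chat ∧
      ∀ ε : ℝ, 0 < ε → ε < ε₀ →
        ∀ (n : ℕ) (θ₁ θ₂ : ℝ),
          θ₁ ∈ Set.Ioo (thetaEps L a b ε - Cy * ε ^ 3) (thetaEps L a b ε + Cy * ε ^ 3) →
          θ₂ ∈ Set.Ioo (thetaEps L a b ε - Cy * ε ^ 3) (thetaEps L a b ε + Cy * ε ^ 3) →
          ∀ y₁ : Fin n → ℝ,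
            (∀ i, |y₁ i| ≤ A) →
            (∀ i, y₁ i ∉ Set.Ioo (-(L * ε ^ 2)) (L * ε ^ 2)) →
            rhoR L (ε ^ 2) y₁ = θ₁ →
            C₀ * n ≤ (Set.ncard {i : Fin n |
              y₁ i ∈ Set.Ioo (-(4 * A / 5)) (-(3 * A / 5))} : ℝ) →
            C₀ * n ≤ (Set.ncard {i : Fin n |
              y₁ i ∈ Set.Ioo (-(2 * A / 5)) (-(A / 5))} : ℝ) →
            C₀ * n ≤ (Set.ncard {i : Fin n |
              y₁ i ∈ Set.Ioo (A / 5) (2 * A / 5)} : ℝ) →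
            C₀ * n ≤ (Set.ncard {i : Fin n |
              y₁ i ∈ Set.Ioo (3 * A / 5) (4 * A / 5)} : ℝ) →
            ∃ y₂ : Fin n → ℝ, (∀ i, |y₂ i| ≤ A) ∧
              rhoR L (ε ^ 2) y₂ = θ₂ ∧
              (∀ i, Real.sign (y₂ i) = Real.sign (y₁ i)) ∧
              (∑ i, |y₂ i|) = (∑ i, |y₁ i|) ∧
              nrm (fun i => y₂ i - y₁ i) / Real.sqrt n ≤ Chat * |θ₁ - θ₂| ∧
              (∀ i, y₁ i ∈ Set.Ioo (-(A / 10)) (A / 10) → y₂ i = y₁ i) := by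
  classical
  obtain ⟨sb, hsbdef⟩ : ∃ x : ℝ, x = Real.sqrt b := ⟨_, rfl⟩
  have hsb : 0 < sb := hsbdef ▸ Real.sqrt_pos.mpr hb
  have hsb2 : sb ^ 2 = b := hsbdef ▸ Real.sq_sqrt hb.le
  obtain ⟨c, hcdef⟩ : ∃ x : ℝ, x = a / (4 * sb) := ⟨_, rfl⟩
  have hc : 0 < c := by rw [hcdef]; positivity
  obtain ⟨M, hMdef⟩ : ∃ x : ℝ, x = 3 * a / sb := ⟨_, rfl⟩
  have hM : 0 < M := by rw [hMdef]; positivity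
  obtain ⟨γ, hγdef⟩ : ∃ x : ℝ, x = 7 * A ^ 2 / 800 := ⟨_, rfl⟩
  have hγ : 0 < γ := by rw [hγdef]; positivity
  obtain ⟨K, hKdef⟩ : ∃ x : ℝ, x = 40 * A * M / (7 * C₀ * c ^ 4) := ⟨_, rfl⟩
  have hK : 0 < K := by rw [hKdef]; positivity
  refine ⟨min 1 (min (a / (2 * L)) (min (b / (4 * L * a))
      (min (a / (4 * sb * Cy)) (γ * C₀ * c ^ 4 / (4 * A ^ 2 * M * Cy))))), 2 * K,
      ?_, by positivity, ?_⟩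
  · refine lt_min one_pos (lt_min (by positivity) (lt_min (by positivity)
      (lt_min (by positivity) (by positivity))))
  intro ε hε hεup
  simp only [lt_min_iff] at hεup
  obtain ⟨hε1, hεa, hεb, hεc, hεd⟩ := hεup
  have hε3 : ε ^ 3 ≤ ε := by
    calc ε ^ 3 ≤ ε ^ 1 := pow_le_pow_of_le_one hε.le hε1.le (by norm_num)
    _ = ε := pow_one ε
  have hε2 : ε ^ 2 ≤ ε := by
    calc ε ^ 2 ≤ ε ^ 1 := pow_le_pow_of_le_one hε.le hε1.le (by norm_num)
    _ = ε := pow_one ε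
  have hεa' : ε * (2 * L) < a := (lt_div_iff₀ (by positivity)).mp hεa
  have hεb' : ε * (4 * L * a) < b := (lt_div_iff₀ (by positivity)).mp hεb
  have hεc' : ε * (4 * sb * Cy) < a := (lt_div_iff₀ (by positivity)).mp hεc
  have hεd' : ε * (4 * A ^ 2 * M * Cy) < γ * C₀ * c ^ 4 :=
    (lt_div_iff₀ (by positivity)).mp hεd
  clear hεa hεb hεc hεd
  -- basic smallness facts
  have he2 : ε ^ 2 * L ≤ a / 2 := by
    have h1 : ε ^ 2 * L ≤ ε * L := mul_le_mul_of_nonneg_right hε2 hL.le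
    linarith
  have he3 : 2 * ε ^ 2 * L * a ≤ b / 2 := by
    have h1 : ε ^ 2 * (L * a) ≤ ε * (L * a) :=
      mul_le_mul_of_nonneg_right hε2 (by positivity)
    nlinarith [h1, hεb']
  have he4 : Cy * ε ^ 3 ≤ a / (4 * sb) := by
    rw [le_div_iff₀ (by positivity)]
    have h1 : ε ^ 3 * (4 * sb * Cy) ≤ ε * (4 * sb * Cy) :=
      mul_le_mul_of_nonneg_right hε3 (by positivity)
    nlinarith [h1, hεc']
  have he5 : 4 * A ^ 2 * M * Cy * ε ^ 3 ≤ γ * C₀ * c ^ 4 := by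
    have h1 : ε ^ 3 * (4 * A ^ 2 * M * Cy) ≤ ε * (4 * A ^ 2 * M * Cy) :=
      mul_le_mul_of_nonneg_right hε3 (by positivity)
    nlinarith [h1, hεd']
  -- bounds on thetaEps
  have hb2 : b / 2 ≤ b - 2 * ε ^ 2 * L * a := by linarith
  have hTnum_lo : a / 2 ≤ a - ε ^ 2 * L := by linarith
  have hTden_pos : 0 < Real.sqrt (b - 2 * ε ^ 2 * L * a) := Real.sqrt_pos.mpr (by linarith)
  have hTden_hi : Real.sqrt (b - 2 * ε ^ 2 * L * a) ≤ sb := by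
    rw [hsbdef]
    apply Real.sqrt_le_sqrt
    have : 0 ≤ ε ^ 2 * L * a := by positivity
    linarith
  have hTden_lo : sb / 2 ≤ Real.sqrt (b - 2 * ε ^ 2 * L * a) := by
    rw [show sb / 2 = Real.sqrt ((sb / 2) ^ 2) from (Real.sqrt_sq (by positivity)).symm]
    apply Real.sqrt_le_sqrt
    nlinarith [hsb2, hb2]
  have hT_lo : a / (2 * sb) ≤ thetaEps L a b ε := by
    rw [thetaEps, show a / (2 * sb) = (a / 2) / sb by ring]
    exact div_le_div₀ (by linarith) hTnum_lo hTden_pos hTden_hi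
  have hT_hi : thetaEps L a b ε ≤ 2 * a / sb := by
    rw [thetaEps, show 2 * a / sb = a / (sb / 2) by field_simp]
    refine div_le_div₀ ha.le ?_ (by positivity) hTden_lo
    have : 0 ≤ ε ^ 2 * L := by positivity
    linarith
  have hhalf : a / (2 * sb) = 2 * (a / (4 * sb)) := by field_simp; ring
  have hone : a / sb = 4 * (a / (4 * sb)) := by field_simp
  intro n θ₁ θ₂ hθ₁ hθ₂ y₁ hbound havoid hrho hI1 hI2 hI3 hI4
  have hθ₁c : c < θ₁ := by
    have := hθ₁.1; rw [hcdef]; rw [hhalf] at hT_lo; linarith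
  have hθ₂c : c < θ₂ := by
    have := hθ₂.1; rw [hcdef]; rw [hhalf] at hT_lo; linarith
  have hq4 : (0:ℝ) < a / (4 * sb) := by positivity
  have hθ₁M : θ₁ < M := by
    have := hθ₁.2; rw [hMdef, show 3 * a / sb = 2 * a / sb + a / sb by ring, hone]
    linarith
  have hθ₂M : θ₂ < M := by
    have := hθ₂.2; rw [hMdef, show 3 * a / sb = 2 * a / sb + a / sb by ring, hone]
    linarith
  have hθ₁pos : 0 < θ₁ := lt_trans hc hθ₁c
  have hθ₂pos : 0 < θ₂ := lt_trans hc hθ₂c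
  -- dispatch n = 0
  rcases Nat.eq_zero_or_pos n with hn0 | hn
  · subst hn0
    rw [show rhoR L (ε ^ 2) y₁ = 0 by simp [rhoR, dotp]] at hrho
    exact absurd hrho.symm hθ₁pos.ne'
  have hnR : (0 : ℝ) < n := by exact_mod_cast hn
  -- entries avoid zero
  have habsge : ∀ i, L * ε ^ 2 ≤ |y₁ i| := by
    intro i
    have h := havoid i
    simp only [Set.mem_Ioo, not_and, not_lt] at h
    rcases le_or_gt (L * ε ^ 2) (y₁ i) with h1 | h1
    · exact h1.trans (le_abs_self _)
    · rcases le_or_gt (y₁ i) (-(L * ε ^ 2)) with h2 | h2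
      · calc L * ε ^ 2 ≤ -(y₁ i) := by linarith only [h2]
          _ ≤ |y₁ i| := neg_le_abs _
      · exact absurd (h h2) (not_le.mpr h1)
  have hy₁ne : ∀ i, y₁ i ≠ 0 := by
    intro i h0
    have h1 := habsge i
    rw [h0, abs_zero] at h1
    have h2 : (0:ℝ) < L * ε ^ 2 := by positivity
    linarith only [h1, h2]
  -- the s-variables
  obtain ⟨s, hsdef⟩ : ∃ s : Fin n → ℝ, s = fun i => |y₁ i| - ε ^ 2 * L := ⟨_, rfl⟩
  have hs_eval : ∀ i, s i = |y₁ i| - ε ^ 2 * L := fun i => by rw [hsdef]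
  have hs0 : ∀ i, 0 ≤ s i := by
    intro i; rw [hs_eval]; have h1 := habsge i; linarith only [h1]
  have hsA : ∀ i, s i ≤ A := by
    intro i; rw [hs_eval]
    have h1 := hbound i
    have h2 : (0:ℝ) ≤ ε ^ 2 * L := by positivity
    linarith only [h1, h2]
  obtain ⟨S, hSdef⟩ : ∃ x : ℝ, x = ∑ i, s i := ⟨_, rfl⟩
  obtain ⟨Q2, hQ2def⟩ : ∃ x : ℝ, x = ∑ i, (s i) ^ 2 := ⟨_, rfl⟩
  have hform : θ₁ = S / (Real.sqrt n * Real.sqrt Q2) := by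
    rw [← hrho, rho_formula L (ε ^ 2) hL y₁ hy₁ne, hSdef, hQ2def]
    congr 1
    · exact Finset.sum_congr rfl fun i _ => by rw [hs_eval]
    · congr 2
      exact Finset.sum_congr rfl fun i _ => by rw [hs_eval]
  have hsqn : 0 < Real.sqrt n := Real.sqrt_pos.mpr hnR
  have hQ2nonneg : 0 ≤ Q2 := by
    rw [hQ2def]; positivity
  have hden_ne : Real.sqrt n * Real.sqrt Q2 ≠ 0 := by
    intro h0
    rw [hform, h0, div_zero] at hθ₁pos
    exact lt_irrefl _ hθ₁pos
  have hsqQ2 : 0 < Real.sqrt Q2 := by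
    rcases (Real.sqrt_nonneg Q2).lt_or_eq with h | h
    · exact h
    · exact absurd (by rw [← h, mul_zero]) hden_ne
  have hSeq : S = θ₁ * (Real.sqrt n * Real.sqrt Q2) := by
    rw [hform]; field_simp
  have hSpos : 0 < S := by
    rw [hSeq]; positivity
  have hS_le : S ≤ n * A := by
    rw [hSdef]
    calc ∑ i, s i ≤ ∑ _i : Fin n, A := Finset.sum_le_sum fun i _ => hsA i
      _ = n * A := by rw [Finset.sum_const, Finset.card_univ, Fintype.card_fin, nsmul_eq_mul]
  have hQ2eq : Q2 = S ^ 2 / (n * θ₁ ^ 2) := by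
    have h1 : Real.sqrt Q2 ^ 2 = Q2 := Real.sq_sqrt hQ2nonneg
    have h2 : Real.sqrt (n : ℝ) ^ 2 = n := Real.sq_sqrt hnR.le
    have h3 : S ^ 2 = θ₁ ^ 2 * ((n : ℝ) * Q2) := by
      rw [hSeq, mul_pow, mul_pow, h1, h2]
    rw [h3]
    field_simp
  -- index sets in the two positive reference intervals
  obtain ⟨P, hPdef⟩ : ∃ F : Finset (Fin n),
      F = Finset.univ.filter (fun i => y₁ i ∈ Set.Ioo (3 * A / 5) (4 * A / 5)) := ⟨_, rfl⟩
  obtain ⟨Q, hQdef⟩ : ∃ F : Finset (Fin n),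
      F = Finset.univ.filter (fun i => y₁ i ∈ Set.Ioo (A / 5) (2 * A / 5)) := ⟨_, rfl⟩
  have hPcard : C₀ * n ≤ (P.card : ℝ) := by
    have hset : {i : Fin n | y₁ i ∈ Set.Ioo (3 * A / 5) (4 * A / 5)} = ↑P := by
      rw [hPdef]; ext i; simp
    rw [hset, Set.ncard_coe_finset] at hI4
    exact hI4
  have hQcard : C₀ * n ≤ (Q.card : ℝ) := by
    have hset : {i : Fin n | y₁ i ∈ Set.Ioo (A / 5) (2 * A / 5)} = ↑Q := by
      rw [hQdef]; ext i; simp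
    rw [hset, Set.ncard_coe_finset] at hI3
    exact hI3
  have hPmem : ∀ i ∈ P, 3 * A / 5 < y₁ i ∧ y₁ i < 4 * A / 5 := by
    intro i hi; rw [hPdef, Finset.mem_filter] at hi; exact hi.2
  have hQmem : ∀ i ∈ Q, A / 5 < y₁ i ∧ y₁ i < 2 * A / 5 := by
    intro i hi; rw [hQdef, Finset.mem_filter] at hi; exact hi.2
  obtain ⟨m, hmdef⟩ : ∃ m : ℕ, m = min P.card Q.card := ⟨_, rfl⟩
  have hmP : m ≤ P.card := hmdef ▸ min_le_left _ _
  have hmQ : m ≤ Q.card := hmdef ▸ min_le_right _ _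
  have hmR : C₀ * n ≤ (m : ℝ) := by
    rw [hmdef]
    push_cast
    exact le_min hPcard hQcard
  have hmRpos : (0 : ℝ) < m := lt_of_lt_of_le (by positivity) hmR
  have hmn : (m : ℝ) ≤ n := by
    have h1 : P.card ≤ n := by
      calc P.card ≤ Finset.univ.card := Finset.card_le_univ P
        _ = n := by rw [Finset.card_univ, Fintype.card_fin]
    exact_mod_cast le_trans hmP h1
  obtain ⟨P', hP'sub, hP'card⟩ := Finset.exists_subset_card_eq hmP
  obtain ⟨Q', hQ'sub, hQ'card⟩ := Finset.exists_subset_card_eq hmQ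
  have hPQ : ∀ i, i ∈ P' → i ∈ Q' → False := by
    intro i h1 h2
    have a1 := (hPmem i (hP'sub h1)).1
    have a2 := (hQmem i (hQ'sub h2)).2
    linarith only [a1, a2, hA]
  -- the quantity D
  obtain ⟨D, hDdef⟩ : ∃ x : ℝ, x = (∑ i ∈ P', s i) - ∑ i ∈ Q', s i := ⟨_, rfl⟩
  have hsP' : ∀ i ∈ P', 3 * A / 5 - ε ^ 2 * L ≤ s i := by
    intro i hi
    rw [hs_eval]
    have h1 := (hPmem i (hP'sub hi)).1
    have h2 : |y₁ i| = y₁ i := abs_of_pos (by linarith only [h1, hA])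
    rw [h2]
    linarith only [h1]
  have hsQ' : ∀ i ∈ Q', s i ≤ 2 * A / 5 - ε ^ 2 * L := by
    intro i hi
    rw [hs_eval]
    have h1 := (hQmem i (hQ'sub hi)).1
    have h1' := (hQmem i (hQ'sub hi)).2
    have h2 : |y₁ i| = y₁ i := abs_of_pos (by linarith only [h1, hA])
    rw [h2]
    linarith only [h1']
  have hD_lo : (m : ℝ) * A / 5 ≤ D := by
    have h1 : P'.card • (3 * A / 5 - ε ^ 2 * L) ≤ ∑ i ∈ P', s i :=
      Finset.card_nsmul_le_sum P' s _ hsP'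
    have h2 : ∑ i ∈ Q', s i ≤ Q'.card • (2 * A / 5 - ε ^ 2 * L) :=
      Finset.sum_le_card_nsmul Q' s _ hsQ'
    rw [hP'card, nsmul_eq_mul] at h1
    rw [hQ'card, nsmul_eq_mul] at h2
    rw [hDdef]
    linarith only [h1, h2]
  -- the target value
  obtain ⟨N2, hN2def⟩ : ∃ x : ℝ, x = S ^ 2 / ((n : ℝ) * θ₂ ^ 2) := ⟨_, rfl⟩
  have hc4 : c ^ 4 ≤ θ₁ ^ 2 * θ₂ ^ 2 := by
    calc c ^ 4 = c ^ 2 * c ^ 2 := by ring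
      _ ≤ θ₁ ^ 2 * θ₂ ^ 2 :=
        mul_le_mul (pow_le_pow_left₀ hc.le hθ₁c.le 2) (pow_le_pow_left₀ hc.le hθ₂c.le 2)
          (by positivity) (by positivity)
  have hsum2M : θ₁ + θ₂ ≤ 2 * M := by linarith only [hθ₁M, hθ₂M]
  have hS2n : S ^ 2 / (n : ℝ) ≤ (n : ℝ) * A ^ 2 := by
    rw [div_le_iff₀ hnR]
    calc S ^ 2 ≤ ((n : ℝ) * A) ^ 2 := pow_le_pow_left₀ hSpos.le hS_le 2
      _ = (n : ℝ) * A ^ 2 * n := by ring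
  have hABSθ : |θ₁ - θ₂| ≤ 2 * (Cy * ε ^ 3) := by
    rw [abs_sub_le_iff]
    constructor
    · linarith only [hθ₁.2, hθ₂.1]
    · linarith only [hθ₂.2, hθ₁.1]
  have key : |N2 - Q2| ≤ 2 * A ^ 2 * M / c ^ 4 * n * |θ₁ - θ₂| := by
    have hid : N2 - Q2 = (S ^ 2 / (n : ℝ)) * ((θ₁ - θ₂) * (θ₁ + θ₂)) / (θ₁ ^ 2 * θ₂ ^ 2) := by
      rw [hN2def, hQ2eq]
      field_simp
      ring
    have e1 : |S ^ 2 / (n : ℝ)| = S ^ 2 / (n : ℝ) := abs_of_nonneg (by positivity)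
    have e2 : |θ₁ + θ₂| = θ₁ + θ₂ := abs_of_pos (by linarith only [hθ₁pos, hθ₂pos])
    have e3 : |θ₁ ^ 2 * θ₂ ^ 2| = θ₁ ^ 2 * θ₂ ^ 2 :=
      abs_of_pos (mul_pos (pow_pos hθ₁pos 2) (pow_pos hθ₂pos 2))
    rw [hid, abs_div, abs_mul, abs_mul, e1, e2, e3]
    have hnum : S ^ 2 / (n : ℝ) * (|θ₁ - θ₂| * (θ₁ + θ₂))
        ≤ (n : ℝ) * A ^ 2 * (|θ₁ - θ₂| * (2 * M)) := by
      apply mul_le_mul hS2n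
        (mul_le_mul_of_nonneg_left hsum2M (abs_nonneg _))
        (mul_nonneg (abs_nonneg _) (by linarith only [hθ₁pos, hθ₂pos]))
        (by positivity)
    calc S ^ 2 / (n : ℝ) * (|θ₁ - θ₂| * (θ₁ + θ₂)) / (θ₁ ^ 2 * θ₂ ^ 2)
        ≤ (n : ℝ) * A ^ 2 * (|θ₁ - θ₂| * (2 * M)) / c ^ 4 :=
          div_le_div₀ (by positivity) hnum (by positivity) hc4
      _ = 2 * A ^ 2 * M / c ^ 4 * n * |θ₁ - θ₂| := by
          field_simp
  have hB : 2 * A ^ 2 * M / c ^ 4 * (n : ℝ) * |θ₁ - θ₂| ≤ γ * (m : ℝ) := by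
    have h3 : (2 * A ^ 2 * M * (n : ℝ)) * |θ₁ - θ₂|
        ≤ (2 * A ^ 2 * M * (n : ℝ)) * (2 * (Cy * ε ^ 3)) :=
      mul_le_mul_of_nonneg_left hABSθ (by positivity)
    have h4 : (n : ℝ) * (4 * A ^ 2 * M * Cy * ε ^ 3) ≤ (n : ℝ) * (γ * C₀ * c ^ 4) :=
      mul_le_mul_of_nonneg_left he5 hnR.le
    have h5 : γ * (C₀ * (n : ℝ)) ≤ γ * (m : ℝ) := mul_le_mul_of_nonneg_left hmR hγ.le
    have h5' : γ * (C₀ * (n : ℝ)) * c ^ 4 ≤ γ * (m : ℝ) * c ^ 4 :=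
      mul_le_mul_of_nonneg_right h5 (pow_pos hc 4).le
    rw [div_mul_eq_mul_div, div_mul_eq_mul_div, div_le_iff₀ (pow_pos hc 4)]
    linarith only [h3, h4, h5']
  have hkeym : |N2 - Q2| ≤ γ * (m : ℝ) := le_trans key hB
  -- the quadratic and IVT
  obtain ⟨τ, hτdef⟩ : ∃ x : ℝ, x = A / 40 := ⟨_, rfl⟩
  have hτpos : 0 < τ := by rw [hτdef]; positivity
  obtain ⟨q, hqdef⟩ : ∃ f : ℝ → ℝ,
      f = fun t => 2 * (m : ℝ) * t ^ 2 + 2 * D * t + Q2 := ⟨_, rfl⟩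
  have hq_eval : ∀ t, q t = 2 * (m : ℝ) * t ^ 2 + 2 * D * t + Q2 := fun t => by rw [hqdef]
  have hcont : ContinuousOn q (Set.Icc (-τ) τ) := by
    rw [hqdef]
    exact (by fun_prop : Continuous fun t : ℝ => 2 * (m : ℝ) * t ^ 2 + 2 * D * t + Q2).continuousOn
  have hAD : A / 20 * ((m : ℝ) * A / 5) ≤ A / 20 * D :=
    mul_le_mul_of_nonneg_left hD_lo (by positivity)
  have hqτ : N2 ≤ q τ := by
    have h1 : N2 - Q2 ≤ γ * m := le_trans (le_abs_self _) hkeym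
    rw [hq_eval, hτdef]
    rw [hγdef] at h1
    have hX : (0:ℝ) ≤ A ^ 2 * (m : ℝ) := by positivity
    linarith only [h1, hAD, hX]
  have hqmτ : q (-τ) ≤ N2 := by
    have h1 : -(γ * m) ≤ N2 - Q2 := by
      have := neg_abs_le (N2 - Q2)
      linarith only [this, hkeym]
    rw [hq_eval, hτdef]
    rw [hγdef] at h1
    have hX : (0:ℝ) ≤ A ^ 2 * (m : ℝ) := by positivity
    linarith only [h1, hAD, hX]
  have hIVT := intermediate_value_Icc (by linarith only [hτpos] : -τ ≤ τ) hcont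
  obtain ⟨t, htmem, htq⟩ := hIVT ⟨hqmτ, hqτ⟩
  have ht_abs : |t| ≤ τ := abs_le.mpr ⟨htmem.1, htmem.2⟩
  -- bound |t| by K |θ₁ - θ₂|
  have h_tK : |t| ≤ K * |θ₁ - θ₂| := by
    have hq_sub : q t - Q2 = t * (2 * (m : ℝ) * t + 2 * D) := by rw [hq_eval]; ring
    have hfac : 7 * (m : ℝ) * A / 20 ≤ 2 * (m : ℝ) * t + 2 * D := by
      have h1 : -τ ≤ t := htmem.1
      have h3 := mul_le_mul_of_nonneg_left h1 (by positivity : (0:ℝ) ≤ (m : ℝ))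
      rw [hτdef] at h3
      linarith only [h3, hD_lo]
    have habs1 : |t| * (7 * (m : ℝ) * A / 20) ≤ 2 * A ^ 2 * M / c ^ 4 * (n : ℝ) * |θ₁ - θ₂| := by
      calc |t| * (7 * (m : ℝ) * A / 20) ≤ |t| * |2 * (m : ℝ) * t + 2 * D| :=
            mul_le_mul_of_nonneg_left (hfac.trans (le_abs_self _)) (abs_nonneg t)
        _ = |q t - Q2| := by rw [hq_sub, abs_mul]
        _ = |N2 - Q2| := by rw [htq]
        _ ≤ _ := key
    have hm7 : (0 : ℝ) < 7 * C₀ * (n : ℝ) * A / 20 := by positivity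
    have h8 : |t| * (7 * C₀ * (n : ℝ) * A / 20)
        ≤ 2 * A ^ 2 * M / c ^ 4 * (n : ℝ) * |θ₁ - θ₂| := by
      refine le_trans ?_ habs1
      apply mul_le_mul_of_nonneg_left ?_ (abs_nonneg t)
      have h9 := mul_le_mul_of_nonneg_left hmR (show (0:ℝ) ≤ 7 * A / 20 by positivity)
      linarith only [h9]
    have h10 : |t| ≤ 2 * A ^ 2 * M / c ^ 4 * (n : ℝ) * |θ₁ - θ₂| / (7 * C₀ * (n : ℝ) * A / 20) :=
      (le_div_iff₀ hm7).mpr h8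
    have h11 : 2 * A ^ 2 * M / c ^ 4 * (n : ℝ) * |θ₁ - θ₂| / (7 * C₀ * (n : ℝ) * A / 20)
        = K * |θ₁ - θ₂| := by
      rw [hKdef]
      field_simp
      ring
    rw [h11] at h10
    exact h10
  -- construct y₂
  obtain ⟨y₂, hy₂def⟩ : ∃ y₂ : Fin n → ℝ,
      y₂ = fun i => y₁ i + (if i ∈ P' then t else 0) - (if i ∈ Q' then t else 0) := ⟨_, rfl⟩
  have hy₂P : ∀ i ∈ P', y₂ i = y₁ i + t := by
    intro i hi
    have h2 : i ∉ Q' := fun h => hPQ i hi h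
    rw [hy₂def]; simp [hi, h2]
  have hy₂Q : ∀ i ∈ Q', y₂ i = y₁ i - t := by
    intro i hi
    have h2 : i ∉ P' := fun h => hPQ i h hi
    rw [hy₂def]; simp [hi, h2]
  have hy₂O : ∀ i, i ∉ P' → i ∉ Q' → y₂ i = y₁ i := by
    intro i h1 h2; rw [hy₂def]; simp [h1, h2]
  have htτ_lo : -(A / 40) ≤ t := by rw [← hτdef]; exact htmem.1
  have htτ_hi : t ≤ A / 40 := by rw [← hτdef]; exact htmem.2
  have hy₂Ppos : ∀ i ∈ P', 0 < y₂ i ∧ y₂ i ≤ A := by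
    intro i hi
    rw [hy₂P i hi]
    have h1 := hPmem i (hP'sub hi)
    exact ⟨by linarith only [h1.1, htτ_lo, hA], by linarith only [h1.2, htτ_hi, hA]⟩
  have hy₂Qpos : ∀ i ∈ Q', 0 < y₂ i ∧ y₂ i ≤ A := by
    intro i hi
    rw [hy₂Q i hi]
    have h1 := hQmem i (hQ'sub hi)
    exact ⟨by linarith only [h1.1, htτ_hi, hA], by linarith only [h1.2, htτ_lo, hA]⟩
  have hy₁Ppos : ∀ i ∈ P', 0 < y₁ i := by
    intro i hi
    have h1 := hPmem i (hP'sub hi)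
    linarith only [h1.1, hA]
  have hy₁Qpos : ∀ i ∈ Q', 0 < y₁ i := by
    intro i hi
    have h1 := hQmem i (hQ'sub hi)
    linarith only [h1.1, hA]
  have habs2 : ∀ i, |y₂ i| = |y₁ i| + ((if i ∈ P' then t else 0) - (if i ∈ Q' then t else 0)) := by
    intro i
    by_cases h1 : i ∈ P'
    · have h2 : i ∉ Q' := fun h => hPQ i h1 h
      rw [abs_of_pos (hy₂Ppos i h1).1, abs_of_pos (hy₁Ppos i h1), hy₂P i h1]
      simp [h1, h2]
    · by_cases h2 : i ∈ Q'
      · rw [abs_of_pos (hy₂Qpos i h2).1, abs_of_pos (hy₁Qpos i h2), hy₂Q i h2]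
        simp only [h1, h2, if_true, if_false]
        ring
      · rw [hy₂O i h1 h2]; simp [h1, h2]
  have hsum_if : ∀ (F : Finset (Fin n)) (f : Fin n → ℝ),
      (∑ i, if i ∈ F then f i else 0) = ∑ i ∈ F, f i := by
    intro F f
    rw [Finset.sum_ite_mem, Finset.univ_inter]
  have hy₂A : ∀ i, |y₂ i| ≤ A := by
    intro i
    by_cases h1 : i ∈ P'
    · rw [abs_of_pos (hy₂Ppos i h1).1]; exact (hy₂Ppos i h1).2
    · by_cases h2 : i ∈ Q'
      · rw [abs_of_pos (hy₂Qpos i h2).1]; exact (hy₂Qpos i h2).2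
      · rw [hy₂O i h1 h2]; exact hbound i
  have hy₂ne : ∀ i, y₂ i ≠ 0 := by
    intro i
    by_cases h1 : i ∈ P'
    · exact (hy₂Ppos i h1).1.ne'
    · by_cases h2 : i ∈ Q'
      · exact (hy₂Qpos i h2).1.ne'
      · rw [hy₂O i h1 h2]; exact hy₁ne i
  have hsign : ∀ i, Real.sign (y₂ i) = Real.sign (y₁ i) := by
    intro i
    by_cases h1 : i ∈ P'
    · rw [Real.sign_of_pos (hy₂Ppos i h1).1, Real.sign_of_pos (hy₁Ppos i h1)]
    · by_cases h2 : i ∈ Q'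
      · rw [Real.sign_of_pos (hy₂Qpos i h2).1, Real.sign_of_pos (hy₁Qpos i h2)]
      · rw [hy₂O i h1 h2]
  have hl1 : (∑ i, |y₂ i|) = ∑ i, |y₁ i| := by
    rw [Finset.sum_congr rfl fun i _ => habs2 i, Finset.sum_add_distrib,
      Finset.sum_sub_distrib, hsum_if P' (fun _ => t), hsum_if Q' (fun _ => t),
      Finset.sum_const, Finset.sum_const, hP'card, hQ'card]
    ring
  have hs'S : ∑ i, (|y₂ i| - ε ^ 2 * L) = S := by
    have hterm : ∀ i, |y₂ i| - ε ^ 2 * L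
        = s i + ((if i ∈ P' then t else 0) - (if i ∈ Q' then t else 0)) := by
      intro i; rw [habs2 i, hs_eval]; ring
    rw [Finset.sum_congr rfl fun i _ => hterm i, Finset.sum_add_distrib,
      Finset.sum_sub_distrib, hsum_if P' (fun _ => t), hsum_if Q' (fun _ => t),
      Finset.sum_const, Finset.sum_const, hP'card, hQ'card, hSdef]
    ring
  have hQ2' : ∑ i, (|y₂ i| - ε ^ 2 * L) ^ 2 = N2 := by
    have hterm : ∀ i, (|y₂ i| - ε ^ 2 * L) ^ 2
        = (s i) ^ 2 + ((if i ∈ P' then 2 * s i * t + t ^ 2 else 0)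
          + (if i ∈ Q' then -(2 * s i * t) + t ^ 2 else 0)) := by
      intro i
      have hi : |y₂ i| - ε ^ 2 * L
          = s i + ((if i ∈ P' then t else 0) - (if i ∈ Q' then t else 0)) := by
        rw [habs2 i, hs_eval]; ring
      rw [hi]
      by_cases h1 : i ∈ P'
      · have h2 : i ∉ Q' := fun h => hPQ i h1 h
        simp only [h1, h2, if_true, if_false]; ring
      · by_cases h2 : i ∈ Q'
        · simp only [h1, h2, if_true, if_false]; ring
        · simp only [h1, h2, if_false]; ring
    rw [Finset.sum_congr rfl fun i _ => hterm i, Finset.sum_add_distrib,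
      Finset.sum_add_distrib, hsum_if P' _, hsum_if Q' _]
    have e1 : ∑ i ∈ P', (2 * s i * t + t ^ 2) = 2 * t * (∑ i ∈ P', s i) + (m : ℝ) * t ^ 2 := by
      rw [Finset.sum_add_distrib, Finset.sum_const, hP'card, nsmul_eq_mul, Finset.mul_sum]
      congr 1
      exact Finset.sum_congr rfl fun i _ => by ring
    have e2 : ∑ i ∈ Q', (-(2 * s i * t) + t ^ 2) = -(2 * t * (∑ i ∈ Q', s i)) + (m : ℝ) * t ^ 2 := by
      rw [Finset.sum_add_distrib, Finset.sum_const, hQ'card, nsmul_eq_mul, Finset.sum_neg_distrib,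
        Finset.mul_sum]
      congr 2
      exact Finset.sum_congr rfl fun i _ => by ring
    rw [e1, e2, ← hQ2def, ← htq, hq_eval, hDdef]
    ring
  have hrho2 : rhoR L (ε ^ 2) y₂ = θ₂ := by
    rw [rho_formula L (ε ^ 2) hL y₂ hy₂ne, hs'S, hQ2']
    have h1 : Real.sqrt N2 = S / (Real.sqrt n * θ₂) := by
      rw [hN2def, show S ^ 2 / ((n : ℝ) * θ₂ ^ 2) = (S / (Real.sqrt n * θ₂)) ^ 2 by
        rw [div_pow, mul_pow, Real.sq_sqrt hnR.le]]
      exact Real.sqrt_sq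
        (div_nonneg hSpos.le (mul_nonneg (Real.sqrt_nonneg _) hθ₂pos.le))
    rw [h1]
    field_simp
  have hδ : ∑ i, (y₂ i - y₁ i) ^ 2 = 2 * (m : ℝ) * t ^ 2 := by
    have hterm : ∀ i, (y₂ i - y₁ i) ^ 2
        = (if i ∈ P' then t ^ 2 else 0) + (if i ∈ Q' then t ^ 2 else 0) := by
      intro i
      by_cases h1 : i ∈ P'
      · have h2 : i ∉ Q' := fun h => hPQ i h1 h
        rw [hy₂P i h1]
        simp only [h1, h2, if_true, if_false]
        ring
      · by_cases h2 : i ∈ Q'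
        · rw [hy₂Q i h2]
          simp only [h1, h2, if_true, if_false]
          ring
        · rw [hy₂O i h1 h2]
          simp only [h1, h2, if_false]
          ring
    rw [Finset.sum_congr rfl fun i _ => hterm i, Finset.sum_add_distrib,
      hsum_if P' _, hsum_if Q' _, Finset.sum_const, Finset.sum_const, hP'card, hQ'card,
      nsmul_eq_mul]
    ring
  have hdist : nrm (fun i => y₂ i - y₁ i) / Real.sqrt n ≤ 2 * K * |θ₁ - θ₂| := by
    have h1 : nrm (fun i => y₂ i - y₁ i) = Real.sqrt (2 * (m : ℝ) * t ^ 2) := by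
      show Real.sqrt (∑ i, (y₂ i - y₁ i) ^ 2) = _
      rw [hδ]
    rw [h1, div_le_iff₀ hsqn]
    have h2 : (m : ℝ) * t ^ 2 ≤ (n : ℝ) * t ^ 2 :=
      mul_le_mul_of_nonneg_right hmn (sq_nonneg t)
    calc Real.sqrt (2 * (m : ℝ) * t ^ 2) ≤ Real.sqrt ((n : ℝ) * (2 * |t|) ^ 2) := by
          apply Real.sqrt_le_sqrt
          rw [show ((n : ℝ) * (2 * |t|) ^ 2) = 4 * ((n : ℝ) * t ^ 2) by
            rw [mul_pow, sq_abs]; ring]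
          have h3 : (0:ℝ) ≤ (n : ℝ) * t ^ 2 := by positivity
          linarith only [h2, h3]
      _ = Real.sqrt (n : ℝ) * (2 * |t|) := by
          rw [Real.sqrt_mul hnR.le, Real.sqrt_sq (by positivity)]
      _ ≤ Real.sqrt (n : ℝ) * (2 * (K * |θ₁ - θ₂|)) := by
          apply mul_le_mul_of_nonneg_left ?_ (Real.sqrt_nonneg _)
          linarith only [h_tK]
      _ = 2 * K * |θ₁ - θ₂| * Real.sqrt n := by ring
  have hsmall : ∀ i, y₁ i ∈ Set.Ioo (-(A / 10)) (A / 10) → y₂ i = y₁ i := by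
    intro i hi
    have h1 : i ∉ P' := by
      intro h
      have ha1 := (hPmem i (hP'sub h)).1
      have ha2 := hi.2
      linarith only [ha1, ha2, hA]
    have h2 : i ∉ Q' := by
      intro h
      have ha1 := (hQmem i (hQ'sub h)).1
      have ha2 := hi.2
      linarith only [ha1, ha2, hA]
    exact hy₂O i h1 h2
  exact ⟨y₂, hy₂A, hrho2, hsign, hl1, hdist, hsmall⟩
end

section
/- Let c, d ∈ ℝ^m be distinct vectors and b > 0 with ‖c − d‖ ≥ √b. Consider the convex problem min_{e ∈ ℝ^m} ‖c + e‖² subject to ‖e + d‖² ≤ b. Its optimal value is m* = (‖c − d‖ − √b)², attained at the unique minimizer e* = (−c − λ*·d)/(1 + λ*) with λ* = ‖d − c‖/√b − 1. Moreover, for every feasible e (i.e. ‖e + d‖² ≤ b): ‖c + e‖² ≥ m* + ‖e − e*‖². -/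
open Real

/-- The Lagrange multiplier `λ* = ‖d − c‖/√b − 1`. -/
noncomputable def lamStar {m : ℕ} (c d : Fin m → ℝ) (b : ℝ) : ℝ :=
  nrm (fun i => d i - c i) / Real.sqrt b - 1

/-- The minimizer `e* = (−c − λ* d)/(1 + λ*)`. -/
noncomputable def eStar {m : ℕ} (c d : Fin m → ℝ) (b : ℝ) : Fin m → ℝ :=
  fun i => (-(c i) - lamStar c d b * d i) / (1 + lamStar c d b)

/-- the constrained least-squares problem
`min ‖c + e‖² s.t. ‖e + d‖² ≤ b` has optimal value `(‖c − d‖ − √b)²`, attained at the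
unique minimizer `e*`, with the strong-convexity lower bound
`‖c + e‖² ≥ m* + ‖e − e*‖²` for every feasible `e`. -/
theorem stmt17 (m : ℕ) (c d : Fin m → ℝ) (b : ℝ) (hb : 0 < b) (hcd : c ≠ d)
    (hfar : Real.sqrt b ≤ nrm (fun i => c i - d i)) :
    (∑ i, (eStar c d b i + d i) ^ 2) ≤ b ∧
    (∑ i, (c i + eStar c d b i) ^ 2) =
      (nrm (fun i => c i - d i) - Real.sqrt b) ^ 2 ∧
    (∀ e : Fin m → ℝ, (∑ i, (e i + d i) ^ 2) ≤ b →
      (nrm (fun i => c i - d i) - Real.sqrt b) ^ 2 + ∑ i, (e i - eStar c d b i) ^ 2 ≤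
        ∑ i, (c i + e i) ^ 2) ∧
    (∀ e : Fin m → ℝ, (∑ i, (e i + d i) ^ 2) ≤ b →
      (∑ i, (c i + e i) ^ 2) = (nrm (fun i => c i - d i) - Real.sqrt b) ^ 2 →
      e = eStar c d b) := by
  set s : ℝ := Real.sqrt b with hsdef
  set r : ℝ := nrm (fun i => c i - d i) with hrdef
  have hs : 0 < s := Real.sqrt_pos.mpr hb
  have hr : 0 < r := lt_of_lt_of_le hs hfar
  have hb' : s ^ 2 = b := Real.sq_sqrt hb.le
  have hsum_nonneg : (0:ℝ) ≤ ∑ i, (c i - d i) ^ 2 :=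
    Finset.sum_nonneg fun i _ => sq_nonneg _
  have hr2 : r ^ 2 = ∑ i, (c i - d i) ^ 2 := by
    rw [hrdef]; exact Real.sq_sqrt hsum_nonneg
  have hnrm_eq : nrm (fun i => d i - c i) = r := by
    rw [hrdef]; unfold nrm
    congr 1
    exact Finset.sum_congr rfl fun i _ => by ring
  have hlam : lamStar c d b = r / s - 1 := by
    rw [lamStar, hnrm_eq, hsdef]
  have h1lam : 1 + lamStar c d b = r / s := by rw [hlam]; ring
  -- pointwise formula for eStar
  have heS : ∀ i, eStar c d b i = (s / r) * (d i - c i) - d i := by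
    intro i
    rw [eStar, h1lam, hlam]
    field_simp
    ring
  have hcS : ∀ i, c i + eStar c d b i = ((r - s) / r) * (c i - d i) := by
    intro i
    rw [heS i]
    field_simp
    ring
  -- sum formulas
  have hfeas : (∑ i, (eStar c d b i + d i) ^ 2) = b := by
    have : ∀ i ∈ Finset.univ, (eStar c d b i + d i) ^ 2
        = (s / r) ^ 2 * (c i - d i) ^ 2 := fun i _ => by rw [heS i]; ring
    rw [Finset.sum_congr rfl this, ← Finset.mul_sum, ← hr2, ← hb']
    field_simp
  have hopt : (∑ i, (c i + eStar c d b i) ^ 2) = (r - s) ^ 2 := by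
    have : ∀ i ∈ Finset.univ, (c i + eStar c d b i) ^ 2
        = ((r - s) / r) ^ 2 * (c i - d i) ^ 2 := fun i _ => by rw [hcS i]; ring
    rw [Finset.sum_congr rfl this, ← Finset.mul_sum, ← hr2]
    field_simp
  -- key identity
  have key : ∀ e : Fin m → ℝ,
      (∑ i, (c i + e i) ^ 2) = (∑ i, (e i - eStar c d b i) ^ 2) + (r - s) ^ 2
        + 2 * s * (r - s) + 2 * ∑ i, (e i + d i) * (c i + eStar c d b i) := by
    intro e
    have hpt : ∀ i ∈ Finset.univ, (c i + e i) ^ 2 =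
        (e i - eStar c d b i) ^ 2 + (1 - s/r) * (1 + s/r) * (c i - d i) ^ 2
          + 2 * ((e i + d i) * (c i + eStar c d b i)) := by
      intro i _
      rw [heS i]
      ring
    rw [Finset.sum_congr rfl hpt]
    rw [Finset.sum_add_distrib, Finset.sum_add_distrib, ← Finset.mul_sum, ← Finset.mul_sum,
      ← hr2]
    have : (1 - s/r) * (1 + s/r) * r ^ 2 = (r - s) ^ 2 + 2 * s * (r - s) := by
      field_simp
      ring
    rw [this]
    ring
  -- Cauchy-Schwarz bound on the cross term
  have hQ : ∀ e : Fin m → ℝ, (∑ i, (e i + d i) ^ 2) ≤ b →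
      -(s * (r - s)) ≤ ∑ i, (e i + d i) * (c i + eStar c d b i) := by
    intro e he
    have cs := Finset.sum_mul_sq_le_sq_mul_sq Finset.univ
      (fun i => e i + d i) (fun i => c i + eStar c d b i)
    rw [hopt] at cs
    have hss : (∑ i, (e i + d i) ^ 2) * (r - s) ^ 2 ≤ s ^ 2 * (r - s) ^ 2 := by
      have := mul_le_mul_of_nonneg_right (he.trans_eq hb'.symm) (sq_nonneg (r - s))
      linarith
    have h2 : (∑ i, (e i + d i) * (c i + eStar c d b i)) ^ 2 ≤ (s * (r - s)) ^ 2 := by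
      calc _ ≤ (∑ i, (e i + d i) ^ 2) * (r - s) ^ 2 := cs
        _ ≤ s ^ 2 * (r - s) ^ 2 := hss
        _ = (s * (r - s)) ^ 2 := by ring
    have hK : 0 ≤ s * (r - s) := mul_nonneg hs.le (by linarith)
    nlinarith [h2, hK]
  refine ⟨hfeas.le, hopt, ?_, ?_⟩
  · intro e he
    have := key e
    have hq := hQ e he
    linarith
  · intro e he heq
    have hk := key e
    have hq := hQ e he
    rw [heq] at hk
    have hz : (∑ i, (e i - eStar c d b i) ^ 2) ≤ 0 := by linarith
    have hz' : (∑ i, (e i - eStar c d b i) ^ 2) = 0 :=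
      le_antisymm hz (Finset.sum_nonneg fun i _ => sq_nonneg _)
    funext i
    have := (Finset.sum_eq_zero_iff_of_nonneg (fun i _ => sq_nonneg _)).mp hz' i
      (Finset.mem_univ i)
    have := pow_eq_zero_iff (n := 2) (by norm_num) |>.mp this
    linarith [this]
end
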